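/- The set of exchangeable probability distributions on {0,1}ᵐ is convex, and its extreme points are exactly e₀,…,eₘ, where e_ℓ puts probability 1/C(m,ℓ) on each binary sequence with exactly ℓ ones and 0 elsewhere. Moreover, every exchangeable distribution has a unique representation as a convex combination of e₀,…,eₘ. -/

import Mathlib

def onesCount {m : ℕ} (x : Fin m → Bool) : ℕ :=
  (Finset.univ.filter (fun i => x i = true)).card

/-- The set of exchangeable probability distributions on `{0,1}^m`. -/
def exchangeableDists (m : ℕ) : Set ((Fin m → Bool) → ℝ) :=
  {P | (∀ x, 0 ≤ P x) ∧ (∑ x : Fin m → Bool, P x = 1) ∧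
       (∀ (π : Equiv.Perm (Fin m)) (x : Fin m → Bool), P (x ∘ π) = P x)}

/-- `eExtreme m ℓ` puts mass `1 / C(m,ℓ)` on each sequence with exactly `ℓ` ones. -/
noncomputable def eExtreme (m : ℕ) (ℓ : Fin (m + 1)) : (Fin m → Bool) → ℝ :=
  fun x => if onesCount x = (ℓ : ℕ) then 1 / (m.choose ℓ : ℝ) else 0


lemma onesCount_le {m : ℕ} (x : Fin m → Bool) : onesCount x ≤ m := by
  classical
  simpa [onesCount] using (Finset.card_filter_le Finset.univ (fun i => x i = true))

lemma onesCount_comp_perm {m : ℕ} (x : Fin m → Bool) (π : Equiv.Perm (Fin m)) :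
    onesCount (x ∘ π) = onesCount x := by
  classical
  exact Finset.card_equiv π (by simp)

def canonSeq (m ℓ : ℕ) : Fin m → Bool := fun i => decide ((i : ℕ) < ℓ)

lemma onesCount_canonSeq {m ℓ : ℕ} (h : ℓ ≤ m) : onesCount (canonSeq m ℓ) = ℓ := by
  classical
  unfold onesCount canonSeq
  have : (Finset.univ.filter (fun i : Fin m => decide ((i:ℕ) < ℓ) = true)).card
      = (Finset.range ℓ).card := by
    refine Finset.card_bij (s := Finset.univ.filter (fun i : Fin m => decide ((i:ℕ) < ℓ) = true))
      (t := Finset.range ℓ) (fun i _ => (i : ℕ)) ?_ ?_ ?_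
    · intro a ha; simp at ha ⊢; exact ha
    · intro a _ b _ hab; exact Fin.ext hab
    · intro b hb
      simp only [Finset.mem_range] at hb
      exact ⟨⟨b, lt_of_lt_of_le hb h⟩, by simp [hb], rfl⟩
  simpa using this

/-- number of sequences with exactly ℓ ones -/
lemma card_onesCount_fiber {m ℓ : ℕ} :
    (Finset.univ.filter (fun x : Fin m → Bool => onesCount x = ℓ)).card = m.choose ℓ := by
  classical
  have hc : (Finset.powersetCard ℓ (Finset.univ : Finset (Fin m))).card = m.choose ℓ := by
    rw [Finset.card_powersetCard, Finset.card_fin]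
  rw [← hc]
  refine Finset.card_bij (s := Finset.univ.filter (fun x : Fin m → Bool => onesCount x = ℓ))
      (t := Finset.powersetCard ℓ (Finset.univ : Finset (Fin m)))
      (fun x _ => Finset.univ.filter (fun i => x i = true)) ?_ ?_ ?_
  · intro x hx
    simp only [Finset.mem_filter, Finset.mem_univ, true_and] at hx
    rw [Finset.mem_powersetCard]
    exact ⟨Finset.filter_subset _ _, hx⟩
  · intro x _ y _ hxy
    funext i
    have := Finset.ext_iff.mp hxy i
    simp at this
    cases hx : x i <;> cases hy : y i <;> simp [hx, hy] at this ⊢ <;> tauto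
  · intro s hs
    rw [Finset.mem_powersetCard] at hs
    refine ⟨fun i => decide (i ∈ s), ?_, ?_⟩
    · simp only [Finset.mem_filter, Finset.mem_univ, true_and]
      unfold onesCount
      rw [← hs.2]
      congr 1
      ext i; simp
    · ext i; simp

lemma exists_perm_comp {m : ℕ} {x y : Fin m → Bool} (h : onesCount x = onesCount y) :
    ∃ π : Equiv.Perm (Fin m), x ∘ π = y := by
  classical
  have hcard : Fintype.card {i // y i = true} = Fintype.card {i // x i = true} := by
    simp only [Fintype.card_subtype]
    exact h.symm
  have hcard' : Fintype.card {i // ¬ y i = true} = Fintype.card {i // ¬ x i = true} := by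
    rw [Fintype.card_subtype_compl, Fintype.card_subtype_compl, hcard]
  let e := Fintype.equivOfCardEq hcard
  let f := Fintype.equivOfCardEq hcard'
  refine ⟨Equiv.subtypeCongr e f, ?_⟩
  funext i
  by_cases hy : y i = true
  · have : (Equiv.subtypeCongr e f) i = ↑(e ⟨i, hy⟩) := by
      simp [Equiv.subtypeCongr, hy]
    rw [Function.comp_apply, this, (e ⟨i, hy⟩).2, hy]
  · have : (Equiv.subtypeCongr e f) i = ↑(f ⟨i, hy⟩) := by
      simp [Equiv.subtypeCongr, hy]
    rw [Function.comp_apply, this]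
    have h2 := (f ⟨i, hy⟩).2
    simp only [Bool.not_eq_true] at h2 hy
    rw [h2, hy]

section main
variable {m : ℕ}

lemma fin_le (ℓ : Fin (m + 1)) : (ℓ : ℕ) ≤ m := Nat.lt_succ_iff.mp ℓ.isLt

lemma choose_ne (ℓ : Fin (m + 1)) : (m.choose ℓ : ℝ) ≠ 0 := by
  have := Nat.choose_pos (fin_le ℓ)
  positivity

lemma exch_const_on_fiber {P : (Fin m → Bool) → ℝ}
    (hP : ∀ (π : Equiv.Perm (Fin m)) (x : Fin m → Bool), P (x ∘ π) = P x)
    {x y : Fin m → Bool} (h : onesCount x = onesCount y) : P x = P y := by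
  obtain ⟨π, hπ⟩ := exists_perm_comp h
  rw [← hπ, hP]

/-- sum over a onesCount fiber of an exchangeable P -/
lemma sum_fiber_eq {P : (Fin m → Bool) → ℝ}
    (hP : ∀ (π : Equiv.Perm (Fin m)) (x : Fin m → Bool), P (x ∘ π) = P x)
    (ℓ : Fin (m + 1)) :
    ∑ x ∈ Finset.univ.filter (fun x : Fin m → Bool => onesCount x = (ℓ : ℕ)), P x
      = (m.choose ℓ : ℝ) * P (canonSeq m ℓ) := by
  classical
  rw [Finset.sum_congr rfl (fun x hx => ?_), Finset.sum_const, card_onesCount_fiber,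
    nsmul_eq_mul]
  simp only [Finset.mem_filter] at hx
  exact exch_const_on_fiber hP (by rw [hx.2, onesCount_canonSeq (fin_le ℓ)])

lemma eExtreme_mem (ℓ : Fin (m + 1)) : eExtreme m ℓ ∈ exchangeableDists m := by
  classical
  refine ⟨fun x => ?_, ?_, fun π x => ?_⟩
  · unfold eExtreme
    split
    · positivity
    · exact le_rfl
  · rw [← Finset.sum_filter_add_sum_filter_not Finset.univ
      (fun x : Fin m → Bool => onesCount x = (ℓ : ℕ))]
    have h1 : ∑ x ∈ Finset.univ.filter (fun x : Fin m → Bool => onesCount x = (ℓ : ℕ)),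
        eExtreme m ℓ x = 1 := by
      rw [Finset.sum_congr rfl (fun x hx => ?_), Finset.sum_const, card_onesCount_fiber,
        nsmul_eq_mul, mul_one_div, div_self (choose_ne ℓ)]
      simp only [Finset.mem_filter] at hx
      simp [eExtreme, hx.2]
    have h2 : ∑ x ∈ Finset.univ.filter (fun x : Fin m → Bool => ¬ onesCount x = (ℓ : ℕ)),
        eExtreme m ℓ x = 0 := by
      refine Finset.sum_eq_zero (fun x hx => ?_)
      simp only [Finset.mem_filter] at hx
      simp [eExtreme, hx.2]
    rw [h1, h2, add_zero]
  · unfold eExtreme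
    rw [onesCount_comp_perm]

end main

section main2
variable {m : ℕ}

lemma eval_mix (w : Fin (m + 1) → ℝ) (ℓ : Fin (m + 1)) :
    (∑ k, w k • eExtreme m k) (canonSeq m ℓ) = w ℓ * (1 / (m.choose ℓ : ℝ)) := by
  classical
  rw [Finset.sum_apply]
  rw [Finset.sum_eq_single ℓ]
  · simp [eExtreme, onesCount_canonSeq (fin_le ℓ)]
  · intro k _ hk
    have : onesCount (canonSeq m (ℓ : ℕ)) ≠ (k : ℕ) := by
      rw [onesCount_canonSeq (fin_le ℓ)]
      exact fun h => hk ((Fin.ext h).symm)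
    simp [eExtreme, this]
  · intro h; exact absurd (Finset.mem_univ ℓ) h

noncomputable def wOf (m : ℕ) (P : (Fin m → Bool) → ℝ) : Fin (m + 1) → ℝ :=
  fun ℓ => (m.choose ℓ : ℝ) * P (canonSeq m ℓ)

lemma repr_eq {P : (Fin m → Bool) → ℝ}
    (hP : ∀ (π : Equiv.Perm (Fin m)) (x : Fin m → Bool), P (x ∘ π) = P x) :
    P = ∑ ℓ, wOf m P ℓ • eExtreme m ℓ := by
  classical
  funext x
  set ℓ₀ : Fin (m + 1) := ⟨onesCount x, Nat.lt_succ_of_le (onesCount_le x)⟩ with hℓ₀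
  rw [Finset.sum_apply, Finset.sum_eq_single ℓ₀]
  · have hcan : onesCount x = onesCount (canonSeq m (ℓ₀ : ℕ)) := by
      rw [onesCount_canonSeq (fin_le ℓ₀)]
    rw [Pi.smul_apply, smul_eq_mul]
    have : eExtreme m ℓ₀ x = 1 / (m.choose ℓ₀ : ℝ) := by
      simp [eExtreme, hℓ₀]
    rw [this, wOf, exch_const_on_fiber hP hcan]
    rw [mul_one_div, mul_comm, mul_div_assoc, div_self (choose_ne ℓ₀), mul_one]
  · intro k _ hk
    have : onesCount x ≠ (k : ℕ) := fun h => hk (Fin.ext h.symm)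
    simp [eExtreme, this]
  · intro h; exact absurd (Finset.mem_univ ℓ₀) h

lemma wOf_sum {P : (Fin m → Bool) → ℝ} (hP : P ∈ exchangeableDists m) :
    ∑ ℓ, wOf m P ℓ = 1 := by
  classical
  obtain ⟨_, hsum, hperm⟩ := hP
  have key : ∀ ℓ : Fin (m + 1), wOf m P ℓ
      = ∑ x ∈ Finset.univ.filter
          (fun x : Fin m → Bool => (⟨onesCount x, Nat.lt_succ_of_le (onesCount_le x)⟩ : Fin (m+1)) = ℓ), P x := by
    intro ℓ
    rw [show (Finset.univ.filter
        (fun x : Fin m → Bool => (⟨onesCount x, Nat.lt_succ_of_le (onesCount_le x)⟩ : Fin (m+1)) = ℓ))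
        = Finset.univ.filter (fun x : Fin m → Bool => onesCount x = (ℓ : ℕ)) by
      apply Finset.filter_congr
      intro x _
      simp [Fin.ext_iff]]
    rw [sum_fiber_eq hperm ℓ, wOf]
  rw [Finset.sum_congr rfl (fun ℓ _ => key ℓ)]
  rw [Finset.sum_fiberwise Finset.univ
    (fun x : Fin m → Bool => (⟨onesCount x, Nat.lt_succ_of_le (onesCount_le x)⟩ : Fin (m+1)))
    P]
  exact hsum

lemma wOf_nonneg {P : (Fin m → Bool) → ℝ} (hP : P ∈ exchangeableDists m) (ℓ : Fin (m + 1)) :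
    0 ≤ wOf m P ℓ := by
  have := hP.1 (canonSeq m ℓ)
  unfold wOf
  positivity

end main2

section main3
variable {m : ℕ}

lemma eq_e_of_comb {a b : ℝ} {P Q : (Fin m → Bool) → ℝ} {ℓ : Fin (m + 1)}
    (ha : 0 < a) (hb : 0 ≤ b) (hP : P ∈ exchangeableDists m) (hQ : Q ∈ exchangeableDists m)
    (h : a • P + b • Q = eExtreme m ℓ) : P = eExtreme m ℓ := by
  classical
  have hzero : ∀ x, onesCount x ≠ (ℓ : ℕ) → P x = 0 := by
    intro x hx
    have hx' := congrFun h x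
    simp only [Pi.add_apply, Pi.smul_apply, smul_eq_mul, eExtreme, hx, if_false] at hx'
    have h1 : 0 ≤ a * P x := mul_nonneg ha.le (hP.1 x)
    have h2 : 0 ≤ b * Q x := mul_nonneg hb (hQ.1 x)
    have : a * P x = 0 := by linarith
    exact (mul_eq_zero.mp this).resolve_left (ne_of_gt ha)
  have hsum : ∑ x ∈ Finset.univ.filter (fun x : Fin m → Bool => onesCount x = (ℓ : ℕ)), P x
      = 1 := by
    rw [← hP.2.1, ← Finset.sum_filter_add_sum_filter_not Finset.univ
      (fun x : Fin m → Bool => onesCount x = (ℓ : ℕ)) P]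
    rw [Finset.sum_eq_zero (fun x hx => hzero x (Finset.mem_filter.mp hx).2), add_zero]
  rw [sum_fiber_eq hP.2.2 ℓ] at hsum
  have hcanon : P (canonSeq m ℓ) = 1 / (m.choose ℓ : ℝ) := by
    rw [eq_div_iff (choose_ne ℓ), mul_comm]
    exact hsum
  funext x
  by_cases hx : onesCount x = (ℓ : ℕ)
  · rw [exch_const_on_fiber hP.2.2 (hx.trans (onesCount_canonSeq (fin_le ℓ)).symm), hcanon]
    simp [eExtreme, hx]
  · rw [hzero x hx]
    simp [eExtreme, hx]

end main3

theorem exchangeable_convex_extreme_points_unique_mixture (m : ℕ) :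
    Convex ℝ (exchangeableDists m) ∧
    Set.extremePoints ℝ (exchangeableDists m) = Set.range (eExtreme m) ∧
    ∀ P ∈ exchangeableDists m,
      ∃! w : Fin (m + 1) → ℝ,
        (∀ ℓ, 0 ≤ w ℓ) ∧ (∑ ℓ, w ℓ = 1) ∧
        P = ∑ ℓ, w ℓ • eExtreme m ℓ := by
  classical
  have hconv : Convex ℝ (exchangeableDists m) := by
    intro P hP Q hQ a b ha hb hab
    refine ⟨fun x => ?_, ?_, fun π x => ?_⟩
    · simp only [Pi.add_apply, Pi.smul_apply, smul_eq_mul]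
      exact add_nonneg (mul_nonneg ha (hP.1 x)) (mul_nonneg hb (hQ.1 x))
    · simp only [Pi.add_apply, Pi.smul_apply, smul_eq_mul]
      rw [Finset.sum_add_distrib, ← Finset.mul_sum, ← Finset.mul_sum, hP.2.1, hQ.2.1,
        mul_one, mul_one, hab]
    · simp only [Pi.add_apply, Pi.smul_apply, smul_eq_mul, hP.2.2 π x, hQ.2.2 π x]
  refine ⟨hconv, ?_, ?_⟩
  · ext P
    constructor
    · rintro ⟨hPmem, hPext⟩
      set w := wOf m P with hw
      have hrepr := repr_eq (m := m) hPmem.2.2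
      have hsum := wOf_sum hPmem
      have hnn := wOf_nonneg hPmem
      have hex : ∃ ℓ, 0 < w ℓ := by
        by_contra hcon
        push_neg at hcon
        have : ∀ ℓ, w ℓ = 0 := fun ℓ => le_antisymm (hcon ℓ) (hnn ℓ)
        rw [Finset.sum_congr rfl (fun ℓ _ => this ℓ), Finset.sum_const, smul_zero] at hsum
        norm_num at hsum
      obtain ⟨ℓ, hℓ⟩ := hex
      by_cases hone : w ℓ = 1
      · -- all other weights vanish, P = e ℓ
        have hrest : ∑ k ∈ Finset.univ.erase ℓ, w k = 0 := by
          have := Finset.add_sum_erase Finset.univ w (Finset.mem_univ ℓ)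
          rw [hsum] at this
          linarith [hone ▸ this]
        have hzero : ∀ k ∈ Finset.univ.erase ℓ, w k = 0 :=
          (Finset.sum_eq_zero_iff_of_nonneg (fun k _ => hnn k)).mp hrest
        refine ⟨ℓ, ?_⟩
        rw [hrepr, Finset.sum_eq_single ℓ]
        · rw [← hw, hone, one_smul]
        · intro k _ hk
          rw [← hw, hzero k (Finset.mem_erase.mpr ⟨hk, Finset.mem_univ k⟩), zero_smul]
        · intro hc; exact absurd (Finset.mem_univ ℓ) hc
      · -- 0 < w ℓ < 1 : P is in the open segment between e ℓ and some Q in the set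
        have hlt : w ℓ < 1 := lt_of_le_of_ne (by
          calc w ℓ ≤ ∑ k, w k := Finset.single_le_sum (fun k _ => hnn k) (Finset.mem_univ ℓ)
          _ = 1 := hsum) hone
        have h1pos : 0 < 1 - w ℓ := by linarith
        have h1ne : (1 - w ℓ) ≠ 0 := ne_of_gt h1pos
        set Q : (Fin m → Bool) → ℝ := (1 - w ℓ)⁻¹ • (P - w ℓ • eExtreme m ℓ) with hQdef
        have hPsub : ∀ x, P x - w ℓ * eExtreme m ℓ x
            = ∑ k ∈ Finset.univ.erase ℓ, w k * eExtreme m k x := by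
          intro x
          have := congrFun hrepr x
          rw [Finset.sum_apply] at this
          simp only [Pi.smul_apply, smul_eq_mul] at this
          rw [this, ← Finset.add_sum_erase Finset.univ _ (Finset.mem_univ ℓ)]
          ring
        have hQmem : Q ∈ exchangeableDists m := by
          refine ⟨fun x => ?_, ?_, fun π x => ?_⟩
          · simp only [hQdef, Pi.smul_apply, Pi.sub_apply, Pi.smul_apply, smul_eq_mul]
            apply mul_nonneg (inv_nonneg.mpr h1pos.le)
            rw [hPsub x]
            exact Finset.sum_nonneg (fun k _ =>
              mul_nonneg (hnn k) ((eExtreme_mem k).1 x))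
          · simp only [hQdef, Pi.smul_apply, Pi.sub_apply, Pi.smul_apply, smul_eq_mul]
            rw [← Finset.mul_sum, Finset.sum_sub_distrib, hPmem.2.1, ← Finset.mul_sum,
              (eExtreme_mem (m := m) ℓ).2.1, mul_one, inv_mul_cancel₀ h1ne]
          · simp only [hQdef, Pi.smul_apply, Pi.sub_apply, Pi.smul_apply, smul_eq_mul,
              hPmem.2.2 π x]
            rw [show eExtreme m ℓ (x ∘ π) = eExtreme m ℓ x from (eExtreme_mem ℓ).2.2 π x]
        have hseg : P ∈ openSegment ℝ (eExtreme m ℓ) Q := by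
          refine ⟨w ℓ, 1 - w ℓ, hℓ, by linarith, by ring, ?_⟩
          rw [hQdef, smul_smul, mul_inv_cancel₀ h1ne, one_smul]
          abel
        have he := hPext (eExtreme_mem ℓ) hQmem hseg
        exact ⟨ℓ, he⟩
    · rintro ⟨ℓ, rfl⟩
      refine ⟨eExtreme_mem ℓ, fun P hPs Q hQs hseg => ?_⟩
      obtain ⟨a, b, ha, hb, hab, habP⟩ := hseg
      exact eq_e_of_comb ha hb.le hPs hQs habP
  · intro P hPmem
    refine ⟨wOf m P, ⟨wOf_nonneg hPmem, wOf_sum hPmem, repr_eq hPmem.2.2⟩, ?_⟩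
    intro w' ⟨_, _, hw'⟩
    funext ℓ
    have h1 : P (canonSeq m ℓ) = w' ℓ * (1 / (m.choose ℓ : ℝ)) := by
      rw [hw', eval_mix]
    have h2 : wOf m P ℓ = (m.choose ℓ : ℝ) * P (canonSeq m ℓ) := rfl
    rw [h2, h1]
    rw [mul_one_div, mul_div_assoc', mul_comm, mul_div_assoc, div_self (choose_ne ℓ), mul_one]
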